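/- If w and w' are two distinct area sequences of Dyck paths of length n, then the posets P(w) and P(w') are not isomorphic. -/

import Mathlib

/-- The poset `P(w)` of a part listing `w`: `i ≺ j` iff `w j − w i ≥ 2`,
or `w j − w i = 1` and `i < j`. -/
def Prel {n : ℕ} (w : Fin n → ℕ) (i j : Fin n) : Prop :=
  w i + 2 ≤ w j ∨ (w j = w i + 1 ∧ i < j)

/-- An area sequence of a Dyck path: `a₁ = 0` and `aᵢ ≤ aᵢ₋₁ + 1`. -/
def IsAreaSeq {n : ℕ} (w : Fin n → ℕ) : Prop :=
  (∀ h : 0 < n, w ⟨0, h⟩ = 0) ∧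
  ∀ i : Fin n, ∀ h : i.val + 1 < n, w ⟨i.val + 1, h⟩ ≤ w i + 1

private lemma aux_max {n : ℕ} {w : Fin n → ℕ} (hw : IsAreaSeq w)
    (j : Fin n) (c : ℕ) (hc : c + 1 ≤ w j) :
    ∃ q : Fin n, q < j ∧ w q = c ∧ ∀ i : Fin n, i < j → w i ≤ c → i ≤ q := by
  classical
  have hn : 0 < n := j.pos
  set S : Finset (Fin n) := Finset.univ.filter (fun q => q < j ∧ w q ≤ c) with hS
  have h0 : w ⟨0, hn⟩ = 0 := hw.1 hn
  have h0j : (⟨0, hn⟩ : Fin n) < j := by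
    rcases Nat.eq_zero_or_pos j.val with h | h
    · exfalso
      have hj0 : j = ⟨0, hn⟩ := Fin.ext h
      rw [hj0, h0] at hc; omega
    · exact Fin.lt_def.mpr h
  have hSne : S.Nonempty := ⟨⟨0, hn⟩, by simp [hS, h0j, h0]⟩
  set q := S.max' hSne with hq
  have hqS : q ∈ S := S.max'_mem hSne
  simp only [hS, Finset.mem_filter, Finset.mem_univ, true_and] at hqS
  obtain ⟨hqj, hqc⟩ := hqS
  have hub : ∀ i : Fin n, i < j → w i ≤ c → i ≤ q := by
    intro i hij hic
    exact S.le_max' i (by simp [hS, hij, hic])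
  refine ⟨q, hqj, ?_, hub⟩
  have hq1n : q.val + 1 < n := lt_of_le_of_lt (Fin.lt_def.mp hqj) j.isLt
  have harea : w ⟨q.val + 1, hq1n⟩ ≤ w q + 1 := hw.2 q hq1n
  rcases eq_or_lt_of_le (Nat.succ_le_of_lt (Fin.lt_def.mp hqj)) with heq | hlt
  · have : (⟨q.val + 1, hq1n⟩ : Fin n) = j := Fin.ext heq
    rw [this] at harea; omega
  · set q1 : Fin n := ⟨q.val + 1, hq1n⟩ with hq1
    have hq1j : q1 < j := Fin.lt_def.mpr hlt
    have : ¬ (w q1 ≤ c) := by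
      intro hle
      have := hub q1 hq1j hle
      have : q.val + 1 ≤ q.val := Fin.le_def.mp this
      omega
    omega

private lemma aux_level {n : ℕ} {w w' : Fin n → ℕ} {e : Fin n ≃ Fin n}
    (hw : IsAreaSeq w)
    (H : ∀ i j : Fin n, Prel w i j → Prel w' (e i) (e j)) :
    ∀ i : Fin n, w i ≤ w' (e i) := by
  suffices h : ∀ v : ℕ, ∀ i : Fin n, w i = v → v ≤ w' (e i) by
    intro i; exact h (w i) i rfl
  intro v
  induction v with
  | zero => intro i _; exact Nat.zero_le _
  | succ v ih =>
    intro i hi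
    obtain ⟨q, hqi, hqv, -⟩ := aux_max hw i v (by omega)
    have hrel : Prel w q i := Or.inr ⟨by omega, hqi⟩
    have := H q i hrel
    have hq' : v ≤ w' (e q) := ih q hqv
    rcases this with h | ⟨h, -⟩ <;> omega

private lemma aux_cross {n : ℕ} {w w' : Fin n → ℕ} {e : Fin n ≃ Fin n}
    (hw : IsAreaSeq w)
    (H : ∀ i j : Fin n, Prel w i j → Prel w' (e i) (e j))
    (weq : ∀ i : Fin n, w' (e i) = w i) :
    ∀ m : ℕ, ∀ i j : Fin n, 1 ≤ m → i < j → w j = w i + m → e i < e j := by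
  intro m
  induction m using Nat.strong_induction_on with
  | _ m ih =>
    intro i j hm hij hwj
    rcases eq_or_lt_of_le hm with h1 | h2
    · -- m = 1
      have hrel : Prel w i j := Or.inr ⟨by omega, hij⟩
      have := H i j hrel
      rcases this with h | ⟨-, h⟩
      · rw [weq i, weq j] at h; omega
      · exact h
    · -- m ≥ 2
      obtain ⟨q, hqj, hqv, hub⟩ := aux_max hw j (w i + (m - 1)) (by omega)
      have hiq : i < q := by
        have hle : i ≤ q := hub i hij (by omega)
        rcases eq_or_lt_of_le hle with h | h
        · exfalso; rw [← h] at hqv; omega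
        · exact h
      have h1 : e i < e q := ih (m - 1) (by omega) i q (by omega) hiq (by omega)
      have hrel : Prel w q j := Or.inr ⟨by omega, hqj⟩
      have := H q j hrel
      rcases this with h | ⟨-, h⟩
      · rw [weq q, weq j] at h; omega
      · exact lt_trans h1 h

/-- If `w` and `w'` are two distinct area sequences of Dyck
paths of length `n`, then the posets `P(w)` and `P(w')` are not isomorphic. -/
theorem distinct_areaSeq_not_iso {n : ℕ} (w w' : Fin n → ℕ)
    (hw : IsAreaSeq w) (hw' : IsAreaSeq w') (hne : w ≠ w') :
    ¬ ∃ e : Fin n ≃ Fin n, ∀ i j : Fin n, Prel w i j ↔ Prel w' (e i) (e j) := by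
  classical
  rintro ⟨e, H⟩
  apply hne
  -- the inverse system
  have H' : ∀ i j : Fin n, Prel w' i j ↔ Prel w (e.symm i) (e.symm j) := by
    intro i j
    have := H (e.symm i) (e.symm j)
    simpa using this.symm
  have weq : ∀ i : Fin n, w' (e i) = w i := by
    intro i
    have h1 : w i ≤ w' (e i) := aux_level hw (fun i j h => (H i j).mp h) i
    have h2 : w' (e i) ≤ w (e.symm (e i)) :=
      aux_level hw' (fun i j h => (H' i j).mp h) (e i)
    rw [Equiv.symm_apply_apply] at h2
    omega
  have weq' : ∀ i : Fin n, w (e.symm i) = w' i := by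
    intro i
    have := weq (e.symm i)
    rw [Equiv.apply_symm_apply] at this
    exact this.symm
  have cross : ∀ i j : Fin n, i < j → w i < w j → e i < e j := by
    intro i j hij hwij
    exact aux_cross hw (fun i j h => (H i j).mp h) weq (w j - w i) i j
      (by omega) hij (by omega)
  have cross' : ∀ i j : Fin n, i < j → w' i < w' j → e.symm i < e.symm j := by
    intro i j hij hwij
    exact aux_cross hw' (fun i j h => (H' i j).mp h) weq' (w' j - w' i) i j
      (by omega) hij (by omega)
  -- full order preservation on distinct levels
  have ord : ∀ i j : Fin n, w i ≠ w j → (i < j ↔ e i < e j) := by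
    have key : ∀ i j : Fin n, w i < w j → (i < j ↔ e i < e j) := by
      intro i j hwij
      constructor
      · intro h; exact cross i j h hwij
      · intro h
        have hw' : w' (e i) < w' (e j) := by rw [weq i, weq j]; exact hwij
        have := cross' (e i) (e j) h hw'
        simpa using this
    intro i j hne'
    rcases lt_or_gt_of_ne hne' with h | h
    · exact key i j h
    · have h2 := key j i h
      have hij : i ≠ j := fun hc => hne' (by rw [hc])
      have heij : e i ≠ e j := fun hc => hij (e.injective hc)
      constructor
      · intro hlt
        rcases lt_trichotomy (e i) (e j) with h3 | h3 | h3
        · exact h3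
        · exact absurd h3 heij
        · exact absurd (h2.mpr h3) (not_lt.mpr (le_of_lt hlt))
      · intro hlt
        rcases lt_trichotomy i j with h3 | h3 | h3
        · exact h3
        · exact absurd h3 hij
        · exact absurd (h2.mp h3) (not_lt.mpr (le_of_lt hlt))
  -- final counting argument by strong induction on positions
  suffices hS : ∀ N : ℕ, ∀ k : Fin n, k.val = N → w k = w' k by
    funext k; exact hS k.val k rfl
  intro N
  induction N using Nat.strong_induction_on with
  | _ N ihN =>
    intro k hk
    by_contra hab
    set a := w k with ha
    -- prefix equality
    have hpre : ∀ j : Fin n, j < k → w j = w' j := by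
      intro j hj
      exact ihN j.val (hk ▸ Fin.lt_def.mp hj) j rfl
    set r : Fin n → ℕ := fun i => (Finset.univ.filter (fun j => j < i ∧ w j ≠ a)).card with hr
    set r' : Fin n → ℕ := fun i => (Finset.univ.filter (fun j => j < i ∧ w' j ≠ a)).card with hr'
    set m := r k with hm
    -- r'(e i) = r i for i at level a
    have hrr : ∀ i : Fin n, w i = a → r i = r' (e i) := by
      intro i hi
      apply Finset.card_bij (fun j _ => e j)
      · intro j hj
        simp only [Finset.mem_filter, Finset.mem_univ, true_and] at hj ⊢
        constructor
        · exact (ord j i (by rw [hi]; exact hj.2)).mp hj.1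
        · rw [weq j]; exact hj.2
      · intro j1 h1 j2 h2 hj
        exact e.injective hj
      · intro j' hj'
        simp only [Finset.mem_filter, Finset.mem_univ, true_and] at hj'
        refine ⟨e.symm j', ?_, by simp⟩
        simp only [Finset.mem_filter, Finset.mem_univ, true_and]
        have h2 : w (e.symm j') ≠ a := by rw [weq']; exact hj'.2
        constructor
        · have := (ord (e.symm j') i (by rw [hi]; exact h2)).mpr
          simp only [Equiv.apply_symm_apply] at this
          exact this hj'.1
        · exact h2
    -- LHS: at least T+1 elements of level a (w) with r ≤ m
    set T := (Finset.univ.filter (fun j => j < k ∧ w j = a)).card with hT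
    have hL : T + 1 ≤ (Finset.univ.filter (fun i => w i = a ∧ r i ≤ m)).card := by
      have hsub : Finset.univ.filter (fun j : Fin n => j ≤ k ∧ w j = a) ⊆
          Finset.univ.filter (fun i => w i = a ∧ r i ≤ m) := by
        intro j hj
        simp only [Finset.mem_filter, Finset.mem_univ, true_and] at hj ⊢
        refine ⟨hj.2, ?_⟩
        apply Finset.card_le_card
        intro x hx
        simp only [Finset.mem_filter, Finset.mem_univ, true_and] at hx ⊢
        exact ⟨lt_of_lt_of_le hx.1 hj.1, hx.2⟩
      have heq2 : Finset.univ.filter (fun j : Fin n => j ≤ k ∧ w j = a) =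
          insert k (Finset.univ.filter (fun j => j < k ∧ w j = a)) := by
        ext x
        simp only [Finset.mem_insert, Finset.mem_filter, Finset.mem_univ, true_and]
        constructor
        · rintro ⟨h1, h2⟩
          rcases eq_or_lt_of_le h1 with h | h
          · exact Or.inl h
          · exact Or.inr ⟨h, h2⟩
        · rintro (h | ⟨h1, h2⟩)
          · exact ⟨le_of_eq h, by rw [h]⟩
          · exact ⟨le_of_lt h1, h2⟩
      have hkn : k ∉ Finset.univ.filter (fun j : Fin n => j < k ∧ w j = a) := by
        simp
      calc T + 1 = (insert k (Finset.univ.filter (fun j => j < k ∧ w j = a))).card := by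
            rw [Finset.card_insert_of_notMem hkn, hT]
        _ = (Finset.univ.filter (fun j : Fin n => j ≤ k ∧ w j = a)).card := by rw [heq2]
        _ ≤ _ := Finset.card_le_card hsub
    -- RHS: at most T elements of level a (w') with r' ≤ m
    have hprefix_eq : Finset.univ.filter (fun j : Fin n => j < k ∧ w' j ≠ a) =
        Finset.univ.filter (fun j : Fin n => j < k ∧ w j ≠ a) := by
      ext x
      simp only [Finset.mem_filter, Finset.mem_univ, true_and]
      constructor
      · rintro ⟨h1, h2⟩; exact ⟨h1, by rw [hpre x h1]; exact h2⟩
      · rintro ⟨h1, h2⟩; exact ⟨h1, by rw [← hpre x h1]; exact h2⟩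
    have hR : (Finset.univ.filter (fun i : Fin n => w' i = a ∧ r' i ≤ m)).card ≤ T := by
      have hsub : Finset.univ.filter (fun i : Fin n => w' i = a ∧ r' i ≤ m) ⊆
          Finset.univ.filter (fun j : Fin n => j < k ∧ w j = a) := by
        intro i hi
        simp only [Finset.mem_filter, Finset.mem_univ, true_and] at hi ⊢
        obtain ⟨hi1, hi2⟩ := hi
        have hik : i < k := by
          rcases lt_trichotomy i k with h | h | h
          · exact h
          · exact absurd (h ▸ hi1).symm hab
          · exfalso
            -- r' i ≥ m + 1
            have hsub2 : insert k (Finset.univ.filter (fun j : Fin n => j < k ∧ w' j ≠ a)) ⊆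
                Finset.univ.filter (fun j => j < i ∧ w' j ≠ a) := by
              intro x hx
              simp only [Finset.mem_insert, Finset.mem_filter, Finset.mem_univ, true_and] at hx ⊢
              rcases hx with hx | ⟨hx1, hx2⟩
              · subst hx
                refine ⟨h, ?_⟩
                intro hc; exact hab hc.symm
              · exact ⟨lt_trans hx1 h, hx2⟩
            have hkn2 : k ∉ Finset.univ.filter (fun j : Fin n => j < k ∧ w' j ≠ a) := by simp
            have := Finset.card_le_card hsub2
            rw [Finset.card_insert_of_notMem hkn2, hprefix_eq] at this
            have hmm : m = (Finset.univ.filter (fun j : Fin n => j < k ∧ w j ≠ a)).card := by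
              rw [hm, hr]
            have hi2' : (Finset.univ.filter (fun j : Fin n => j < i ∧ w' j ≠ a)).card ≤ m := hi2
            omega
        refine ⟨hik, ?_⟩
        rw [hpre i hik]; exact hi1
      calc _ ≤ (Finset.univ.filter (fun j : Fin n => j < k ∧ w j = a)).card :=
            Finset.card_le_card hsub
        _ = T := by rw [hT]
    -- injection via e
    have hinj : (Finset.univ.filter (fun i : Fin n => w i = a ∧ r i ≤ m)).card ≤
        (Finset.univ.filter (fun i : Fin n => w' i = a ∧ r' i ≤ m)).card := by
      apply Finset.card_le_card_of_injOn (fun i => e i)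
      · intro i hi
        simp only [Finset.coe_filter, Finset.mem_coe, Set.mem_setOf_eq, Finset.mem_filter, Finset.mem_univ, true_and] at hi ⊢
        exact ⟨by rw [weq]; exact hi.1, by rw [← hrr i hi.1]; exact hi.2⟩
      · intro i1 _ i2 _ h
        exact e.injective h
    omega
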